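/- A finitely generated subgroup H of PSL_2(Z) contains a parabolic element if and only if some non-trivial power of ab labels a cycle in the Stallings graph Γ(H). -/

import Mathlib

/-- Relators of the presentation `⟨a, b ∣ a² = b³ = 1⟩`. -/
def pslRels : Set (FreeGroup Bool) := {FreeGroup.of true ^ 2, FreeGroup.of false ^ 3}

/-- The modular group `PSL₂(ℤ) = ⟨a, b ∣ a² = b³ = 1⟩ = ℤ/2 * ℤ/3`. -/
abbrev PSL2Z : Type := PresentedGroup pslRels

/-- The order-2 generator `a`. -/
def gen_a : PSL2Z := PresentedGroup.of true

/-- The order-3 generator `b`. -/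
def gen_b : PSL2Z := PresentedGroup.of false

/-- The alphabet `{a, b, b⁻¹}`. -/
inductive Letter : Type
  | A | B | Binv
deriving DecidableEq

/-- Interpretation of a letter in `PSL₂(ℤ)`. -/
def Letter.toG : Letter → PSL2Z
  | .A => gen_a
  | .B => gen_b
  | .Binv => gen_b⁻¹

/-- Evaluation of a word over `{a, b, b⁻¹}` in `PSL₂(ℤ)`. -/
def evalWord (w : List Letter) : PSL2Z := (w.map Letter.toG).prod

/-- Two adjacent letters alternate between `a` and `{b, b⁻¹}`. -/
def AltPair (x y : Letter) : Prop := (x = .A ∧ y ≠ .A) ∨ (x ≠ .A ∧ y = .A)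

/-- A word is in normal form (freely reduced, no factor `a²`, `b²`, `b⁻²`):
it has length ≤ 1 or alternates `a` with letters in `{b, b⁻¹}`. -/
def NormalWord (w : List Letter) : Prop := w.Chain' AltPair

/-- `w` is a geodesic representative of `g`. -/
def Geodesic (w : List Letter) (g : PSL2Z) : Prop :=
  evalWord w = g ∧ ∀ w' : List Letter, evalWord w' = g → w.length ≤ w'.length

/-- A cyclically reduced word: a normal form of length 1, or starting with `a`
and ending in `{b, b⁻¹}`, or starting in `{b, b⁻¹}` and ending with `a`. -/
def CyclicallyReducedWord (w : List Letter) : Prop :=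
  NormalWord w ∧ (w.length = 1 ∨
    ∃ x y, w.head? = some x ∧ w.getLast? = some y ∧
      ((x = .A ∧ y ≠ .A) ∨ (x ≠ .A ∧ y = .A)))

/-- The right-coset equivalence: `x ≈ y` iff `x y⁻¹ ∈ H` (so `Hx = Hy`). -/
def cosetSetoid (H : Subgroup PSL2Z) : Setoid PSL2Z where
  r x y := x * y⁻¹ ∈ H
  iseqv := by
    refine ⟨fun x => by simpa using H.one_mem, fun {x y} h => ?_, fun {x y z} hxy hyz => ?_⟩
    · simpa [mul_inv_rev] using H.inv_mem h
    · simpa [mul_assoc] using H.mul_mem hxy hyz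

/-- The vertex set of the Schreier graph of `H`: right cosets of `H`. -/
def Coset (H : Subgroup PSL2Z) : Type := Quotient (cosetSetoid H)

/-- The base vertex `H·1` of the Schreier graph. -/
def base (H : Subgroup PSL2Z) : Coset H := Quotient.mk (cosetSetoid H) 1

/-- Reading a letter from a vertex of the Schreier graph: `Hg ↦ Hgℓ`. -/
def step {H : Subgroup PSL2Z} (v : Coset H) (ℓ : Letter) : Coset H :=
  Quotient.map (fun g => g * ℓ.toG)
    (fun x y hxy => by
      change x * y⁻¹ ∈ H at hxy
      change x * ℓ.toG * (y * ℓ.toG)⁻¹ ∈ H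
      simpa [mul_inv_rev, mul_assoc] using hxy) v

/-- Reading a word from a vertex of the Schreier graph. -/
def readW {H : Subgroup PSL2Z} (v : Coset H) (w : List Letter) : Coset H :=
  w.foldl step v

/-- Some geodesic (normal-form) cycle at the base vertex reads letter `m`
from the vertex `u`. -/
def edgeOkAux (H : Subgroup PSL2Z) (u : Coset H) (m : Letter) : Prop :=
  ∃ w p q : List Letter, NormalWord w ∧ evalWord w ∈ H ∧
    w = p ++ m :: q ∧ readW (base H) p = u

/-- Traversing letter `ℓ` from `v` uses an edge of the Stallings graph `Γ(H)`
(the subgraph of the Schreier graph spanned by the geodesic cycles at the base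
vertex); `a`-edges and `b`-edges may be traversed in either direction. -/
def edgeOk (H : Subgroup PSL2Z) (v : Coset H) : Letter → Prop
  | .A => edgeOkAux H v .A ∨ edgeOkAux H (step v .A) .A
  | .B => edgeOkAux H v .B ∨ edgeOkAux H (step v .B) .Binv
  | .Binv => edgeOkAux H v .Binv ∨ edgeOkAux H (step v .Binv) .B

/-- `w` labels a path in the Stallings graph `Γ(H)` starting at `v`. -/
def labelsPathFrom (H : Subgroup PSL2Z) : Coset H → List Letter → Prop
  | _, [] => True
  | v, ℓ :: w => edgeOk H v ℓ ∧ labelsPathFrom H (step v ℓ) w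

/-- `w` labels a cycle at `v` in the Stallings graph `Γ(H)`. -/
def labelsCycleAt (H : Subgroup PSL2Z) (v : Coset H) (w : List Letter) : Prop :=
  labelsPathFrom H v w ∧ readW v w = v

/-- `v` is a vertex of the Stallings graph `Γ(H)`. -/
def StallingsVertex (H : Subgroup PSL2Z) (v : Coset H) : Prop :=
  ∃ w p q : List Letter, NormalWord w ∧ evalWord w ∈ H ∧ w = p ++ q ∧
    readW (base H) p = v

/-- `H` is almost malnormal: `H ∩ H^x` is finite for every `x ∉ H`. -/
def AlmostMalnormal (H : Subgroup PSL2Z) : Prop :=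
  ∀ x : PSL2Z, x ∉ H → {g : PSL2Z | g ∈ H ∧ x * g * x⁻¹ ∈ H}.Finite
-- basic lemmas
@[simp] lemma evalWord_nil : evalWord [] = 1 := rfl
@[simp] lemma evalWord_cons (ℓ : Letter) (w : List Letter) :
    evalWord (ℓ :: w) = ℓ.toG * evalWord w := by
  simp [evalWord]
@[simp] lemma evalWord_append (u v : List Letter) :
    evalWord (u ++ v) = evalWord u * evalWord v := by
  simp [evalWord]

lemma rel_one {r : FreeGroup Bool} (hr : r ∈ pslRels) :
    (QuotientGroup.mk r : PSL2Z) = 1 := by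
  rw [QuotientGroup.eq_one_iff]
  exact Subgroup.subset_normalClosure hr

lemma gen_a_sq : gen_a * gen_a = 1 := by
  have := rel_one (show FreeGroup.of true ^ 2 ∈ pslRels by simp [pslRels])
  rw [show gen_a = (QuotientGroup.mk (FreeGroup.of true) : PSL2Z) from rfl]
  rw [sq] at this
  exact this

lemma gen_b_cube : gen_b * gen_b * gen_b = 1 := by
  have := rel_one (show FreeGroup.of false ^ 3 ∈ pslRels by simp [pslRels])
  rw [show gen_b = (QuotientGroup.mk (FreeGroup.of false) : PSL2Z) from rfl]
  rw [pow_succ, pow_two] at this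
  exact this

lemma gen_a_inv : gen_a⁻¹ = gen_a := by
  rw [inv_eq_iff_mul_eq_one, gen_a_sq]
lemma gen_b_inv : gen_b⁻¹ = gen_b * gen_b := by
  rw [inv_eq_iff_mul_eq_one, ← mul_assoc, gen_b_cube]
lemma gen_binv_sq : gen_b⁻¹ * gen_b⁻¹ = gen_b := by
  rw [gen_b_inv, show gen_b * gen_b * (gen_b * gen_b) = gen_b * gen_b * gen_b * gen_b by group,
    gen_b_cube, one_mul]
instance : ∀ x y : Letter, Decidable (AltPair x y) := fun x y => by
  unfold AltPair; infer_instance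

lemma altPair_symm {x y : Letter} (h : AltPair x y) : AltPair y x := by
  unfold AltPair at *; tauto

lemma altPair_iff {x y : Letter} : AltPair x y ↔ ((x = Letter.A) ↔ (y ≠ Letter.A)) := by
  cases x <;> cases y <;> simp [AltPair]

/-- formal inverse of a letter -/
def Letter.invL : Letter → Letter
  | .A => .A
  | .B => .Binv
  | .Binv => .B

@[simp] lemma Letter.toG_invL (ℓ : Letter) : ℓ.invL.toG = ℓ.toG⁻¹ := by
  cases ℓ <;> simp [Letter.invL, Letter.toG, gen_a_inv]

@[simp] lemma Letter.invL_eq_A {ℓ : Letter} : ℓ.invL = Letter.A ↔ ℓ = Letter.A := by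
  cases ℓ <;> simp [Letter.invL]

/-- formal inverse of a word -/
def invW (w : List Letter) : List Letter := (w.map Letter.invL).reverse

@[simp] lemma invW_length (w : List Letter) : (invW w).length = w.length := by
  simp [invW]

@[simp] lemma evalWord_invW (w : List Letter) : evalWord (invW w) = (evalWord w)⁻¹ := by
  induction w with
  | nil => simp [invW]
  | cons ℓ w ih => simp [invW, evalWord] at *; simp [ih, mul_assoc]

lemma NormalWord.invW {w : List Letter} (h : NormalWord w) : NormalWord (invW w) := by
  unfold NormalWord _root_.invW at *
  rw [List.Chain', List.isChain_reverse, List.isChain_map]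
  refine h.imp ?_
  intro a b hab
  have := altPair_symm hab
  show AltPair b.invL a.invL
  rw [altPair_iff] at this ⊢
  simpa using this
lemma altPair_of_nonA {x y y' : Letter} (h : AltPair x y) (hy : y ≠ .A) (hy' : y' ≠ .A) :
    AltPair x y' := by
  rw [altPair_iff] at h ⊢; tauto

lemma altPair_of_nonA' {x x' y : Letter} (h : AltPair x y) (hx : x ≠ .A) (hx' : x' ≠ .A) :
    AltPair x' y := by
  rw [altPair_iff] at h ⊢; tauto

/-- The result type of concatenation-with-reduction of two normal words. -/
def CNF (U W : List Letter) : Prop :=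
  ∃ U₁ U₂ W₂ W₁ μ : List Letter, U = U₁ ++ U₂ ∧ W = W₂ ++ W₁ ∧
    U₂.length = W₂.length ∧ μ.length ≤ 1 ∧
    NormalWord (U₁ ++ μ ++ W₁) ∧ evalWord (U₂ ++ W₂) = evalWord μ

lemma cnf_nil_left (W : List Letter) (hW : NormalWord W) : CNF [] W :=
  ⟨[], [], [], W, [], by simp, by simp, rfl, by simp, by simpa using hW, by simp⟩

lemma cnf_nil_right (U : List Letter) (hU : NormalWord U) : CNF U [] :=
  ⟨U, [], [], [], [], by simp, by simp, rfl, by simp, by simpa using hU, by simp⟩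

lemma cnf_compat {U' W' : List Letter} {u w : Letter} (hU : NormalWord (U' ++ [u]))
    (hW : NormalWord (w :: W')) (h : AltPair u w) : CNF (U' ++ [u]) (w :: W') := by
  refine ⟨U' ++ [u], [], [], w :: W', [], by simp, by simp, rfl, by simp, ?_, by simp⟩
  show NormalWord ((U' ++ [u]) ++ [] ++ (w :: W'))
  rw [NormalWord, List.Chain', List.append_nil, List.isChain_append]
  refine ⟨hU, hW, ?_⟩
  intro x hx y hy
  rw [List.getLast?_concat] at hx
  simp at hx hy
  subst hx; rw [← hy]; exact h

lemma cnf_cancel {U' W' : List Letter} {u w : Letter} (hrec : CNF U' W')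
    (hc : u.toG * w.toG = 1) : CNF (U' ++ [u]) (w :: W') := by
  obtain ⟨U₁, U₂, W₂, W₁, μ, hU, hW, hlen, hμ, hnorm, heval⟩ := hrec
  refine ⟨U₁, U₂ ++ [u], w :: W₂, W₁, μ, by rw [hU, List.append_assoc], by simp [hW], by simp [hlen],
    hμ, hnorm, ?_⟩
  have : evalWord ((U₂ ++ [u]) ++ (w :: W₂)) =
      evalWord U₂ * (u.toG * w.toG * evalWord W₂) := by
    simp [mul_assoc]
  rw [this, hc, one_mul, ← evalWord_append, heval]

lemma cnf_merge {U' W' : List Letter} {u w : Letter} (hU : NormalWord (U' ++ [u]))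
    (hW : NormalWord (w :: W')) (μ : Letter) (hval : u.toG * w.toG = μ.toG)
    (hu : u ≠ .A) (hw : w ≠ .A) (hμ : μ ≠ .A) : CNF (U' ++ [u]) (w :: W') := by
  refine ⟨U', [u], [w], W', [μ], rfl, rfl, rfl, by simp, ?_, by simp [hval]⟩
  show NormalWord (U' ++ [μ] ++ W')
  rw [NormalWord, List.Chain', List.append_assoc, List.isChain_append]
  rw [NormalWord, List.Chain', List.isChain_append] at hU
  rw [NormalWord, List.Chain', List.isChain_cons] at hW
  refine ⟨hU.1, ?_, ?_⟩
  · rw [List.singleton_append, List.isChain_cons]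
    exact ⟨fun y hy => altPair_of_nonA' (hW.1 y hy) hw hμ, hW.2⟩
  · intro x hx y hy
    simp at hy; subst hy
    exact altPair_of_nonA (hU.2.2 x hx u (by simp)) hu hμ
lemma concatNF : ∀ (U W : List Letter), NormalWord U → NormalWord W → CNF U W := by
  intro U
  induction U using List.reverseRecOn with
  | nil => intro W _ hW; exact cnf_nil_left W hW
  | append_singleton U' u ih =>
    intro W hU hW
    cases W with
    | nil => exact cnf_nil_right _ hU
    | cons w W' =>
      have hU' : NormalWord U' := (List.isChain_append.mp hU).1
      have hW' : NormalWord W' := hW.tail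
      cases u <;> cases w
      · exact cnf_cancel (ih W' hU' hW') (by simp [Letter.toG, gen_a_sq])
      · exact cnf_compat hU hW (by decide)
      · exact cnf_compat hU hW (by decide)
      · exact cnf_compat hU hW (by decide)
      · exact cnf_merge hU hW .Binv (by simp [Letter.toG]; exact gen_b_inv.symm)
          (by decide) (by decide) (by decide)
      · exact cnf_cancel (ih W' hU' hW') (by simp [Letter.toG])
      · exact cnf_compat hU hW (by decide)
      · exact cnf_cancel (ih W' hU' hW') (by simp [Letter.toG])
      · exact cnf_merge hU hW .B (by simp [Letter.toG]; exact gen_binv_sq)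
          (by decide) (by decide) (by decide)

lemma CNF.eval {U W : List Letter} (h : CNF U W) :
    ∃ U₁ U₂ W₂ W₁ μ : List Letter, U = U₁ ++ U₂ ∧ W = W₂ ++ W₁ ∧
    U₂.length = W₂.length ∧ μ.length ≤ 1 ∧
    NormalWord (U₁ ++ μ ++ W₁) ∧ evalWord (U₂ ++ W₂) = evalWord μ ∧
    evalWord (U₁ ++ μ ++ W₁) = evalWord U * evalWord W := by
  obtain ⟨U₁, U₂, W₂, W₁, μ, h1, h2, h3, h4, h5, h6⟩ := h
  refine ⟨U₁, U₂, W₂, W₁, μ, h1, h2, h3, h4, h5, h6, ?_⟩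
  subst h1; subst h2
  simp at h6 ⊢
  rw [← h6]; group
lemma exists_normalWord (g : PSL2Z) : ∃ X : List Letter, NormalWord X ∧ evalWord X = g := by
  obtain ⟨w, rfl⟩ : ∃ w : FreeGroup Bool, (QuotientGroup.mk w : PSL2Z) = g :=
    Quot.exists_rep g
  induction w using FreeGroup.induction_on with
  | C1 => exact ⟨[], by constructor, rfl⟩
  | of b =>
    cases b
    · exact ⟨[.B], by constructor, by show gen_b * 1 = _; rw [mul_one]; rfl⟩
    · exact ⟨[.A], by constructor, by show gen_a * 1 = _; rw [mul_one]; rfl⟩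
  | inv_of b hb =>
    obtain ⟨X, hX, hval⟩ := hb
    exact ⟨invW X, hX.invW, by simp [hval]; rfl⟩
  | mul x y hx hy =>
    obtain ⟨X, hX, hvalX⟩ := hx
    obtain ⟨Y, hY, hvalY⟩ := hy
    obtain ⟨U₁, U₂, W₂, W₁, μ, _, _, _, _, hnorm, _, heval⟩ := (concatNF X Y hX hY).eval
    exact ⟨U₁ ++ μ ++ W₁, hnorm, by rw [heval, hvalX, hvalY]; simp; rfl⟩

/-- The word `(AB)^n`. -/
def cw (n : ℕ) : List Letter := List.flatten (List.replicate n [Letter.A, Letter.B])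

@[simp] lemma cw_zero : cw 0 = [] := rfl
lemma cw_succ (n : ℕ) : cw (n + 1) = .A :: .B :: cw n := rfl
lemma cw_add (m n : ℕ) : cw (m + n) = cw m ++ cw n := by
  induction m with
  | zero => simp
  | succ m ih => rw [show m + 1 + n = (m + n) + 1 by omega, cw_succ, cw_succ, ih]; rfl
@[simp] lemma cw_length (n : ℕ) : (cw n).length = 2 * n := by
  induction n with
  | zero => rfl
  | succ n ih => rw [cw_succ]; simp only [List.length_cons, ih]; omega

lemma evalWord_cw (n : ℕ) : evalWord (cw n) = (gen_a * gen_b) ^ n := by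
  induction n with
  | zero => simp
  | succ n ih => rw [cw_succ, pow_succ']; simp [Letter.toG, ih, mul_assoc]

lemma cw_head (n : ℕ) (hn : 0 < n) : (cw n).head? = some Letter.A := by
  cases n with
  | zero => omega
  | succ n => rw [cw_succ]; rfl

lemma normal_cw (n : ℕ) : NormalWord (cw n) := by
  induction n with
  | zero => constructor
  | succ n ih =>
    rw [cw_succ]
    rw [NormalWord, List.Chain', List.isChain_cons] ; refine ⟨?_, ?_⟩
    · intro y hy; simp only [List.head?_cons, Option.mem_def, Option.some.injEq] at hy; subst hy; decide
    · rw [List.isChain_cons]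
      refine ⟨?_, ih⟩
      intro y hy
      rcases Nat.eq_zero_or_pos n with h0 | h0
      · subst h0; simp at hy
      · rw [cw_head n h0] at hy; simp only [Option.mem_def, Option.some.injEq] at hy; subst hy; decide
section CosetLemmas
variable {H : Subgroup PSL2Z}

lemma mkc_eq_mkc {g g' : PSL2Z} :
    (Quotient.mk (cosetSetoid H) g : Coset H) = Quotient.mk (cosetSetoid H) g' ↔
      g * g'⁻¹ ∈ H :=
  ⟨fun h => Quotient.exact h, fun h => Quotient.sound h⟩

lemma step_mk (g : PSL2Z) (ℓ : Letter) :
    step (Quotient.mk (cosetSetoid H) g) ℓ = Quotient.mk (cosetSetoid H) (g * ℓ.toG) := rfl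

lemma readW_mk (g : PSL2Z) (w : List Letter) :
    readW (Quotient.mk (cosetSetoid H) g) w = Quotient.mk (cosetSetoid H) (g * evalWord w) := by
  induction w generalizing g with
  | nil => exact congrArg (Quotient.mk _) (mul_one g).symm
  | cons ℓ w ih =>
    show readW (step (Quotient.mk (cosetSetoid H) g) ℓ) w = _
    rw [step_mk, ih, evalWord_cons, mul_assoc]

lemma base_eq : base H = Quotient.mk (cosetSetoid H) 1 := rfl

end CosetLemmas
lemma split_of_append_eq {l₁ l₂ l₃ l₄ : List Letter} (h : l₁ ++ l₂ = l₃ ++ l₄)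
    (hl : l₁.length ≤ l₃.length) : ∃ F, l₃ = l₁ ++ F ∧ l₂ = F ++ l₄ := by
  rcases List.append_eq_append_iff.mp h with ⟨F, h1, h2⟩ | ⟨F, h1, h2⟩
  · exact ⟨F, h1, h2⟩
  · have hF : F = [] := by
      have := congrArg List.length h1
      simp at this
      exact List.eq_nil_of_length_eq_zero (by omega)
    subst hF
    exact ⟨[], by simp [h1], by simp [h2]⟩

section Main
variable {H : Subgroup PSL2Z} {x : PSL2Z} {m : ℕ}

lemma memconj (hx : x * (gen_a * gen_b) ^ m * x⁻¹ ∈ H) (k : ℕ) :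
    x * (gen_a * gen_b) ^ (m * k) * x⁻¹ ∈ H := by
  have : x * (gen_a * gen_b) ^ (m * k) * x⁻¹ = (x * (gen_a * gen_b) ^ m * x⁻¹) ^ k := by
    rw [pow_mul, conj_pow]
  rw [this]
  exact pow_mem hx k

lemma conj_quot (hx : x * (gen_a * gen_b) ^ m * x⁻¹ ∈ H) {s j : ℕ} (hle : j ≤ s)
    (hmod : s % m = j % m) (c : PSL2Z) :
    (Quotient.mk (cosetSetoid H) (x * (gen_a * gen_b) ^ s * c) : Coset H) =
      Quotient.mk (cosetSetoid H) (x * (gen_a * gen_b) ^ j * c) := by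
  have hdvd : m ∣ s - j := by
    rcases Nat.eq_zero_or_pos m with h0 | h0
    · subst h0; simp at hmod ⊢; omega
    · exact (Nat.modEq_iff_dvd' hle).mp hmod.symm
  obtain ⟨k, hk⟩ := hdvd
  rw [mkc_eq_mkc]
  have : x * (gen_a * gen_b) ^ s * c * (x * (gen_a * gen_b) ^ j * c)⁻¹ =
      x * (gen_a * gen_b) ^ (m * k) * x⁻¹ := by
    rw [show s = m * k + j by omega, pow_add]; group
  rw [this]
  exact memconj hx k

lemma vert_eq (hx : x * (gen_a * gen_b) ^ m * x⁻¹ ∈ H) {s j : ℕ}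
    (hmod : s % m = j % m) (c : PSL2Z) :
    (Quotient.mk (cosetSetoid H) (x * (gen_a * gen_b) ^ s * c) : Coset H) =
      Quotient.mk (cosetSetoid H) (x * (gen_a * gen_b) ^ j * c) := by
  rcases le_total j s with h | h
  · exact conj_quot hx h hmod c
  · exact (conj_quot hx h hmod.symm c).symm

end Main
lemma edges_lemma (H : Subgroup PSL2Z) (x : PSL2Z) (m : ℕ) (hm : 1 ≤ m)
    (hx : x * (gen_a * gen_b) ^ m * x⁻¹ ∈ H) :
    (∀ j : ℕ, edgeOkAux H (Quotient.mk (cosetSetoid H) (x * (gen_a * gen_b) ^ j)) .A) ∧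
    (∀ j : ℕ, edgeOkAux H
      (Quotient.mk (cosetSetoid H) (x * (gen_a * gen_b) ^ j * gen_a)) .B) := by
  obtain ⟨X, hX, hXval⟩ := exists_normalWord x
  set L := X.length with hL
  set n := m * (2 * L + 2) with hn
  have hnL : 2 * L + 2 ≤ n := by
    calc 2 * L + 2 = 1 * (2 * L + 2) := by ring
    _ ≤ m * (2 * L + 2) := Nat.mul_le_mul_right _ hm
  obtain ⟨C₁, C₂, D₂, D₁, μ, hcw, hXi, hlen1, hμ1, hNRin, hev1, hevRin⟩ :=
    (concatNF (cw n) (invW X) (normal_cw n) hX.invW).eval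
  obtain ⟨X₁, X₂, E₂, E₁, ν, hXd, hRind, hlen2, hν1, hNW, hev2, hevW⟩ :=
    (concatNF X (C₁ ++ μ ++ D₁) hX hNRin).eval
  set Wd := X₁ ++ ν ++ E₁ with hWd
  have hWmem : evalWord Wd ∈ H := by
    rw [hWd, hevW, hevRin, evalWord_cw, evalWord_invW, hXval, ← mul_assoc, hn]
    exact memconj hx (2 * L + 2)
  have hlC2 : C₂.length ≤ L := by
    have h1 := congrArg List.length hXi
    simp only [List.length_append, invW_length] at h1
    omega
  have hlE2 : E₂.length ≤ L := by
    have h1 := congrArg List.length hXd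
    simp only [List.length_append] at h1
    omega
  have hlC1 : C₁.length + C₂.length = 2 * n := by
    have h1 := congrArg List.length hcw
    simp only [List.length_append, cw_length] at h1
    omega
  have hsplit1 : E₂ ++ E₁ = C₁ ++ (μ ++ D₁) := by
    rw [← hRind]; simp [List.append_assoc]
  obtain ⟨F, hC1, hE1⟩ := split_of_append_eq hsplit1 (by omega)
  have good : ∀ t : ℕ, L ≤ 2 * t → 2 * t + 2 + L ≤ 2 * n →
      edgeOkAux H (Quotient.mk (cosetSetoid H) (x * (gen_a * gen_b) ^ t)) .A ∧
      edgeOkAux H (Quotient.mk (cosetSetoid H) (x * (gen_a * gen_b) ^ t * gen_a)) .B := by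
    intro t ht1 ht2
    have hcwsplit : cw n = cw t ++ (.A :: .B :: cw (n - t - 1)) := by
      conv_lhs => rw [show n = t + ((n - t - 1) + 1) by omega, cw_add, cw_succ]
    have h1 : E₂ ++ (F ++ C₂) = cw t ++ (.A :: .B :: cw (n - t - 1)) := by
      rw [← List.append_assoc, ← hC1, ← hcw, hcwsplit]
    obtain ⟨F', hFt, hFC⟩ := split_of_append_eq h1 (by rw [cw_length]; omega)
    have hlF' : E₂.length + F'.length = 2 * t := by
      have h2 := congrArg List.length hFt
      simp only [List.length_append, cw_length] at h2
      omega
    have hlF : E₂.length + F.length = C₁.length := by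
      have h2 := congrArg List.length hC1
      simp only [List.length_append] at h2
      omega
    have h2 : (F' ++ [.A, .B]) ++ cw (n - t - 1) = F ++ C₂ := by
      rw [hFC]; simp
    obtain ⟨G, hFG, hGC⟩ := split_of_append_eq h2 (by simp; omega)
    set PA := X₁ ++ ν ++ F' with hPA
    have hdecompA : Wd = PA ++ .A :: (.B :: (G ++ (μ ++ D₁))) := by
      rw [hWd, hE1, hFG, hPA]; simp [List.append_assoc]
    have hdecompB : Wd = (PA ++ [.A]) ++ .B :: (G ++ (μ ++ D₁)) := by
      rw [hdecompA]; simp [List.append_assoc]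
    have hevPA : evalWord PA = x * (gen_a * gen_b) ^ t := by
      have e1 : evalWord X₁ * evalWord X₂ = x := by rw [← evalWord_append, ← hXd, hXval]
      have e2 : evalWord ν = evalWord X₂ * evalWord E₂ := by
        rw [← hev2, evalWord_append]
      have e3 : evalWord E₂ * evalWord F' = (gen_a * gen_b) ^ t := by
        rw [← evalWord_append, ← hFt, evalWord_cw]
      calc evalWord PA = evalWord X₁ * (evalWord ν * evalWord F') := by
            rw [hPA]; simp [mul_assoc]
      _ = evalWord X₁ * (evalWord X₂ * ((gen_a * gen_b) ^ t)) := by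
            rw [e2, mul_assoc, e3]
      _ = x * (gen_a * gen_b) ^ t := by rw [← mul_assoc, e1]
    constructor
    · exact ⟨Wd, PA, .B :: (G ++ (μ ++ D₁)), hNW, hWmem, hdecompA,
        by rw [base_eq, readW_mk, one_mul, hevPA]⟩
    · refine ⟨Wd, PA ++ [.A], G ++ (μ ++ D₁), hNW, hWmem, hdecompB, ?_⟩
      rw [base_eq, readW_mk, one_mul, evalWord_append, hevPA]
      have hA1 : evalWord [Letter.A] = gen_a := by simp [Letter.toG]
      rw [hA1]
  have hm0 : 0 < m := hm
  have bounds : ∀ j : ℕ, L ≤ 2 * (j % m + m * (L + 1)) ∧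
      2 * (j % m + m * (L + 1)) + 2 + L ≤ 2 * n ∧ (j % m + m * (L + 1)) % m = j % m := by
    intro j
    have hjm : j % m < m := Nat.mod_lt j hm0
    have hMn1 : L + m ≤ m * (L + 1) := by
      have : m * (L + 1) = m * L + m := by ring
      have h2 : L ≤ m * L := Nat.le_mul_of_pos_left L hm0
      omega
    have hne : n = m * (L + 1) + m * (L + 1) := by rw [hn]; ring
    have hmod : (j % m + m * (L + 1)) % m = j % m := by
      rw [Nat.add_mul_mod_self_left]
      exact Nat.mod_mod_of_dvd j dvd_rfl
    refine ⟨by omega, by omega, hmod⟩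
  constructor
  · intro j
    obtain ⟨hb1, hb2, hb3⟩ := bounds j
    have hA := (good _ hb1 hb2).1
    have hv := vert_eq hx hb3 (1 : PSL2Z)
    simp only [mul_one] at hv
    rwa [hv] at hA
  · intro j
    obtain ⟨hb1, hb2, hb3⟩ := bounds j
    have hB := (good _ hb1 hb2).2
    have hv := vert_eq hx hb3 gen_a
    rwa [hv] at hB
lemma path_lemma (H : Subgroup PSL2Z) (x : PSL2Z) (m : ℕ) (hm : 1 ≤ m)
    (hx : x * (gen_a * gen_b) ^ m * x⁻¹ ∈ H) (k : ℕ) : ∀ j : ℕ,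
    labelsPathFrom H (Quotient.mk (cosetSetoid H) (x * (gen_a * gen_b) ^ j)) (cw k) := by
  obtain ⟨EA, EB⟩ := edges_lemma H x m hm hx
  induction k with
  | zero => intro j; exact trivial
  | succ k ih =>
    intro j
    rw [cw_succ]
    show edgeOk H _ .A ∧ labelsPathFrom H _ (.B :: cw k)
    refine ⟨Or.inl (EA j), ?_⟩
    rw [step_mk, show (Letter.A).toG = gen_a from rfl]
    show edgeOk H _ .B ∧ labelsPathFrom H _ (cw k)
    refine ⟨Or.inl (EB j), ?_⟩
    rw [step_mk, show (Letter.B).toG = gen_b from rfl]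
    have he : x * (gen_a * gen_b) ^ j * gen_a * gen_b = x * (gen_a * gen_b) ^ (j + 1) := by
      rw [pow_succ]; group
    rw [he]
    exact ih (j + 1)

lemma forward_lemma (H : Subgroup PSL2Z) (x : PSL2Z) (m : ℕ) (hm : 1 ≤ m)
    (hx : x * (gen_a * gen_b) ^ m * x⁻¹ ∈ H) :
    labelsCycleAt H (Quotient.mk (cosetSetoid H) x) (cw m) := by
  constructor
  · have hp := path_lemma H x m hm hx m 0
    have hv : (Quotient.mk (cosetSetoid H) (x * (gen_a * gen_b) ^ 0) : Coset H) =
        Quotient.mk (cosetSetoid H) x := by rw [pow_zero, mul_one]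
    rwa [hv] at hp
  · rw [readW_mk, evalWord_cw]
    exact mkc_eq_mkc.mpr hx

/-- A finitely generated subgroup `H ≤ PSL₂(ℤ)` contains a parabolic element
(a conjugate of a non-trivial power of `ab`) if and only if some non-trivial
power of `ab` labels a cycle in the Stallings graph `Γ(H)`. -/
theorem parabolic_iff_ab_cycle (H : Subgroup PSL2Z) (hH : H.FG) :
    (∃ (x : PSL2Z) (m : ℤ), m ≠ 0 ∧ x * (gen_a * gen_b) ^ m * x⁻¹ ∈ H) ↔
      ∃ (v : Coset H) (m : ℕ), 1 ≤ m ∧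
        labelsCycleAt H v (List.flatten (List.replicate m [Letter.A, Letter.B])) := by
  constructor
  · rintro ⟨x, mz, hmz, hmem⟩
    have hpos : 1 ≤ mz.natAbs := Nat.one_le_iff_ne_zero.mpr (Int.natAbs_ne_zero.mpr hmz)
    have key : x * (gen_a * gen_b) ^ (mz.natAbs) * x⁻¹ ∈ H := by
      rcases lt_or_gt_of_ne hmz with h | h
      · have h2 := H.inv_mem hmem
        have e : (x * (gen_a * gen_b) ^ mz * x⁻¹)⁻¹ =
            x * (gen_a * gen_b) ^ (mz.natAbs) * x⁻¹ := by
          rw [show ((gen_a * gen_b) ^ (mz.natAbs)) = (gen_a * gen_b) ^ ((mz.natAbs : ℤ)) from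
            (zpow_natCast _ _).symm, show ((mz.natAbs : ℤ)) = -mz by omega]
          group
        rwa [e] at h2
      · have e : x * (gen_a * gen_b) ^ mz * x⁻¹ =
            x * (gen_a * gen_b) ^ (mz.natAbs) * x⁻¹ := by
          rw [show ((gen_a * gen_b) ^ (mz.natAbs)) = (gen_a * gen_b) ^ ((mz.natAbs : ℤ)) from
            (zpow_natCast _ _).symm, show ((mz.natAbs : ℤ)) = mz by omega]
        rwa [e] at hmem
    exact ⟨Quotient.mk (cosetSetoid H) x, mz.natAbs, hpos,
      forward_lemma H x mz.natAbs hpos key⟩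
  · rintro ⟨v, M, hM, hcyc⟩
    obtain ⟨g, hg⟩ := Quot.exists_rep v
    have hg' : Quotient.mk (cosetSetoid H) g = v := hg
    have hc : readW (Quotient.mk (cosetSetoid H) g) (cw M) = Quotient.mk (cosetSetoid H) g := by
      rw [hg']; exact hcyc.2
    rw [readW_mk, evalWord_cw] at hc
    replace hc := mkc_eq_mkc.mp hc
    refine ⟨g, (M : ℤ), by exact_mod_cast Nat.one_le_iff_ne_zero.mp hM, ?_⟩
    rw [zpow_natCast]
    exact hc
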